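/- L(ω₁) is not a Frolik space: there is no homeomorphism of L(ω₁) onto a closed subspace of a countable product of σ-compact spaces. -/

import Mathlib

open Set Topology

/-- A filter base on `X`: a nonempty family of subsets of `X`, not containing `∅`,
closed under pairwise intersections. -/
def FilterBaseOn (X : Type*) (F : Set (Set X)) : Prop :=
  F.Nonempty ∧ ∅ ∉ F ∧ ∀ A ∈ F, ∀ B ∈ F, A ∩ B ∈ F

/-- `F` converges to the set `W`: every open set containing `W` contains a member of `F`. -/
def ConvergesTo {X : Type*} [TopologicalSpace X] (F : Set (Set X)) (W : Set X) : Prop :=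
  ∀ U : Set X, IsOpen U → W ⊆ U → ∃ A ∈ F, A ⊆ U

/-- `F` is total: every filter base extending `F` has nonempty adherence
(intersection of the closures of all its members). -/
def TotalFB {X : Type*} [TopologicalSpace X] (F : Set (Set X)) : Prop :=
  ∀ H : Set (Set X), FilterBaseOn X H → F ⊆ H → (⋂ A ∈ H, closure A).Nonempty

/-- `F` is stable under countable intersections: every countable subfamily of `F`
has a member of `F` contained in its intersection. -/
def StableCI {X : Type*} (F : Set (Set X)) : Prop :=
  ∀ S ⊆ F, S.Countable → ∃ H ∈ F, H ⊆ ⋂₀ S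

/-- `F` is ω-closed: the intersection of any nonempty countable subfamily of `F` belongs to `F`. -/
def OmegaClosedFB {X : Type*} (F : Set (Set X)) : Prop :=
  ∀ S ⊆ F, S.Countable → S.Nonempty → ⋂₀ S ∈ F

/-- `F` is δ-stable: every nonempty countable subfamily of `F` has nonempty intersection. -/
def DeltaStableFB {X : Type*} (F : Set (Set X)) : Prop :=
  ∀ S ⊆ F, S.Countable → S.Nonempty → (⋂₀ S).Nonempty

/-- `G_δ(K)`: the family of Gδ subsets (countable intersections of open sets) containing `K`. -/
def GdeltaNbhds {X : Type*} [TopologicalSpace X] (K : Set X) : Set (Set X) :=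
  {G | K ⊆ G ∧ IsGδ G}

/-- `F ∨ G = {F₀ ∩ F₁ : F₀, F₁ ∈ F ∪ G}`. -/
def joinFB {X : Type*} (F G : Set (Set X)) : Set (Set X) :=
  {A | ∃ F₀ ∈ F ∪ G, ∃ F₁ ∈ F ∪ G, A = F₀ ∩ F₁}

/-- `X` is totally Lindelöf: every filter base stable under countable intersections
extends to a total filter base stable under countable intersections. -/
def TotallyLindelofSpace (X : Type*) [TopologicalSpace X] : Prop :=
  ∀ F : Set (Set X), FilterBaseOn X F → StableCI F →
    ∃ H : Set (Set X), FilterBaseOn X H ∧ StableCI H ∧ F ⊆ H ∧ TotalFB H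

/-- `X` is Alster: every cover of `X` by Gδ sets such that every compact subset of `X`
is contained in a single member admits a countable subcover. -/
def AlsterSpace (X : Type*) [TopologicalSpace X] : Prop :=
  ∀ 𝒢 : Set (Set X), (∀ G ∈ 𝒢, IsGδ G) → (∀ K : Set X, IsCompact K → ∃ G ∈ 𝒢, K ⊆ G) →
    ∃ 𝒞 ⊆ 𝒢, 𝒞.Countable ∧ ⋃₀ 𝒞 = Set.univ

/-- `D` is a discrete subset: each of its points has an open neighborhood meeting `D`
only in that point. -/
def IsDiscreteSubset {X : Type*} [TopologicalSpace X] (D : Set X) : Prop :=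
  ∀ a ∈ D, ∃ U : Set X, IsOpen U ∧ U ∩ D = {a}

/-- The first uncountable ordinal ω₁. -/
noncomputable def omega1 : Ordinal := (Cardinal.aleph 1).ord

/-- The underlying set of `L(ω₁)`: the ordinals `≤ ω₁`. -/
def Lomega1 : Type _ := {o : Ordinal // o ≤ omega1}

/-- The top point `ω₁` of `L(ω₁)`. -/
noncomputable def Lomega1.top : Lomega1 := ⟨omega1, le_refl _⟩

/-- The topology of the one-point Lindelöfication `L(ω₁)`: every point `α < ω₁` is isolated,
and the neighborhoods of the point `ω₁` are the sets containing it with countable complement. -/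
instance : TopologicalSpace Lomega1 :=
  TopologicalSpace.generateFrom
    ({U | ∃ x : Lomega1, x.1 < omega1 ∧ U = {x}} ∪
     {U | Lomega1.top ∈ U ∧ {x : Lomega1 | x ∉ U}.Countable})

section Aux

open Filter

variable {X : Type*}

/-- Shrink an uncountable set along a countable "decomposition" at each step,
keeping it uncountable. -/
lemma aux_tree (T : ℕ → ℕ → Set X) (hT : ∀ n x, ∃ m, x ∈ T n m)
    (D : Set X) (hD : ¬ D.Countable) :
    ∃ (g : ℕ → ℕ) (B : ℕ → Set X),
      B 0 = D ∧ (∀ n, ¬ (B n).Countable) ∧ (∀ n, B (n + 1) ⊆ B n) ∧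
      (∀ n, B (n + 1) ⊆ T n (g n)) := by
  have step : ∀ C : Set X, ¬ C.Countable → ∀ n : ℕ, ∃ m, ¬ (C ∩ T n m).Countable := by
    intro C hC n
    by_contra h
    push_neg at h
    apply hC
    have hsub : C ⊆ ⋃ m, C ∩ T n m := by
      intro x hx
      obtain ⟨m, hm⟩ := hT n x
      exact Set.mem_iUnion.2 ⟨m, hx, hm⟩
    exact (Set.countable_iUnion h).mono hsub
  choose M hM using step
  let Brec : ℕ → {C : Set X // ¬ C.Countable} := fun n =>
    Nat.rec ⟨D, hD⟩ (fun k ih => ⟨ih.1 ∩ T k (M ih.1 ih.2 k), hM ih.1 ih.2 k⟩) n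
  refine ⟨fun n => M (Brec n).1 (Brec n).2 n, fun n => (Brec n).1, rfl,
    fun n => (Brec n).2, ?_, ?_⟩
  · intro n x hx
    exact hx.1
  · intro n x hx
    exact hx.2

/-- Pick an injective selector through a sequence of infinite sets. -/
lemma aux_seq (B : ℕ → Set X) (hB : ∀ n, (B n).Infinite) :
    ∃ d : ℕ → X, Function.Injective d ∧ ∀ n, d n ∈ B n := by
  classical
  choose φ hφ1 hφ2 using fun n (s : Finset X) => (hB n).exists_notMem_finset s
  let l : ℕ → Finset X := fun n => Nat.rec ∅ (fun k ih => insert (φ k ih) ih) n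
  have hl : ∀ n, l (n + 1) = insert (φ n (l n)) (l n) := fun n => rfl
  set d : ℕ → X := fun n => φ n (l n) with hd
  have hmono : ∀ k n, k ≤ n → l k ⊆ l n := by
    intro k n hkn
    induction n with
    | zero => simpa [Nat.le_zero.mp hkn] using Finset.Subset.refl _
    | succ m ih =>
      rcases Nat.lt_or_ge k (m + 1) with h | h
      · exact (ih (Nat.lt_succ_iff.mp h)).trans (by rw [hl]; exact Finset.subset_insert _ _)
      · have : k = m + 1 := le_antisymm hkn h
        subst this; exact Finset.Subset.refl _
  have hdl : ∀ k n, k < n → d k ∈ l n := by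
    intro k n hkn
    apply hmono (k + 1) n hkn
    rw [hl]
    exact Finset.mem_insert_self _ _
  have hne : ∀ k n, k < n → d k ≠ d n := by
    intro k n hkn h
    have h2 : d n ∈ l n := h ▸ hdl k n hkn
    exact hφ2 n (l n) h2
  refine ⟨d, ?_, fun n => hφ1 n (l n)⟩
  intro a b hab
  rcases lt_trichotomy a b with h | h | h
  · exact absurd hab (hne a b h)
  · exact h
  · exact absurd hab.symm (hne b a h)

end Aux

/-- Points below `ω₁` are isolated in `L(ω₁)`. -/
lemma Lomega1.isOpen_singleton {x : Lomega1} (hx : x.1 < omega1) : IsOpen ({x} : Set Lomega1) :=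
  TopologicalSpace.isOpen_generateFrom_of_mem (Or.inl ⟨x, hx, rfl⟩)

/-- Countable sets of isolated points are closed in `L(ω₁)`. -/
lemma Lomega1.isClosed_of_countable {A : Set Lomega1} (h1 : Lomega1.top ∉ A)
    (h2 : A.Countable) : IsClosed A := by
  rw [← isOpen_compl_iff]
  refine TopologicalSpace.isOpen_generateFrom_of_mem (Or.inr ⟨h1, ?_⟩)
  simpa [Set.compl] using h2

/-- The set of isolated points of `L(ω₁)` is uncountable. -/
lemma Lomega1.not_countable_isolated : ¬ ({x : Lomega1 | x.1 < omega1}).Countable := by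
  intro h
  have hinj : Function.Injective
      (fun o : Set.Iio omega1 => (⟨⟨o.1, le_of_lt o.2⟩, o.2⟩ :
        {x : Lomega1 | x.1 < omega1})) := by
    intro a b hab
    ext
    exact congrArg (fun z => z.1.1) hab
  have hle := Cardinal.mk_le_of_injective hinj
  rw [Ordinal.mk_Iio_ordinal] at hle
  simp only [omega1, Cardinal.card_ord] at hle
  have hlt := hle.trans_lt ((Cardinal.countable_iff_lt_aleph_one _).mp h)
  rw [Cardinal.lift_lt_aleph_one] at hlt
  exact absurd hlt (lt_irrefl _)


theorem stmt14 :
    ¬ ∃ (S : ℕ → Type 1) (t : ∀ n, TopologicalSpace (S n)),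
        (∀ n, @SigmaCompactSpace (S n) (t n)) ∧
        ∃ f : Lomega1 → (∀ n, S n),
          @IsClosedEmbedding Lomega1 (∀ n, S n) _ (@Pi.topologicalSpace ℕ S t) f := by
  rintro ⟨S, t, hσ, f, hf⟩
  letI : ∀ n, TopologicalSpace (S n) := t
  haveI : ∀ n, SigmaCompactSpace (S n) := hσ
  have hfinj : Function.Injective f := hf.isEmbedding.injective
  -- the uncountable discrete image
  set A : Set Lomega1 := {x : Lomega1 | x.1 < omega1} with hAdef
  set D : Set (∀ n, S n) := f '' A with hDdef
  have hD : ¬ D.Countable := by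
    intro h
    exact Lomega1.not_countable_isolated ((h.preimage hfinj).mono (Set.subset_preimage_image f A))
  -- shrink D through compact cylinders
  set T : ℕ → ℕ → Set (∀ n, S n) := fun n m => {x | x n ∈ compactCovering (S n) m} with hTdef
  have hT : ∀ n x, ∃ m, x ∈ T n m := fun n x => exists_mem_compactCovering (x n)
  obtain ⟨g, B, hB0, hBu, hBdec, hBT⟩ := aux_tree T hT D hD
  have hchain : ∀ i n, i ≤ n → B n ⊆ B i := by
    intro i n hin
    induction n with
    | zero => simpa [Nat.le_zero.mp hin] using subset_rfl
    | succ m ih =>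
      rcases Nat.lt_or_ge i (m + 1) with h | h
      · exact (hBdec m).trans (ih (Nat.lt_succ_iff.mp h))
      · have : i = m + 1 := le_antisymm hin h
        subst this; exact subset_rfl
  -- injective selector
  have hBinf : ∀ n, (B n).Infinite := by
    intro n
    by_contra h
    exact hBu n (Set.not_infinite.mp h).countable
  obtain ⟨d, hdinj, hdB⟩ := aux_seq B hBinf
  have hdD : ∀ n, d n ∈ D := fun n => hB0 ▸ hchain 0 n (Nat.zero_le n) (hdB n)
  -- ultrafilter limit q of the d n
  set U : Ultrafilter ℕ := Filter.hyperfilter ℕ with hUdef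
  have hcoord : ∀ i : ℕ, {n : ℕ | d n i ∈ compactCovering (S i) (g i)} ∈ U := by
    intro i
    apply Filter.mem_hyperfilter_of_finite_compl
    apply (Set.finite_Iic (i + 1)).subset
    intro n hn
    simp only [Set.mem_compl_iff, Set.mem_setOf_eq] at hn
    by_contra hni
    simp only [Set.mem_Iic, not_le] at hni
    exact hn (hBT i (hchain (i + 1) n (le_of_lt hni) (hdB n)))
  have hq : ∀ i : ℕ, ∃ a ∈ compactCovering (S i) (g i),
      ↑(U.map (fun n => d n i)) ≤ 𝓝 a := by
    intro i
    refine (isCompact_compactCovering (S i) (g i)).ultrafilter_le_nhds _ ?_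
    rw [Filter.le_principal_iff]
    exact Filter.mem_map.mpr (hcoord i)
  choose q hq1 hq2 using hq
  have htend : Filter.Tendsto d (↑U) (𝓝 q) := by
    rw [tendsto_pi_nhds]
    intro i
    exact hq2 i
  -- the countable closed set E = range d
  set E : Set (∀ n, S n) := Set.range d with hEdef
  have hEcble : E.Countable := Set.countable_range d
  have hED : E ⊆ D := by
    rintro _ ⟨n, rfl⟩
    exact hdD n
  have hEclosed : IsClosed E := by
    have hpre : (f ⁻¹' E).Countable := hEcble.preimage hfinj
    have htop : Lomega1.top ∉ f ⁻¹' E := by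
      intro h
      obtain ⟨a, haA, hae⟩ := hED h
      rw [hfinj hae] at haA
      simp only [hAdef, Set.mem_setOf_eq] at haA
      exact absurd haA (lt_irrefl _)
    have hclosedA : IsClosed (f ⁻¹' E) := Lomega1.isClosed_of_countable htop hpre
    have himg : f '' (f ⁻¹' E) = E :=
      Set.image_preimage_eq_of_subset (hED.trans (Set.image_subset_range f A))
    rw [← himg]
    exact hf.isClosedMap _ hclosedA
  -- q is in E, so q = d k = f α for an isolated α
  have hqE : q ∈ E := by
    have : q ∈ closure E :=
      mem_closure_of_tendsto htend (Filter.Eventually.of_forall fun n => Set.mem_range_self n)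
    rwa [hEclosed.closure_eq] at this
  obtain ⟨k, hk⟩ := hqE
  obtain ⟨α, hαA, hα⟩ := hdD k
  have hopen : IsOpen ({α} : Set Lomega1) := Lomega1.isOpen_singleton hαA
  obtain ⟨W, hWopen, hWpre⟩ := hf.isInducing.isOpen_iff.mp hopen
  have hqW : q ∈ W := by
    rw [← hk, ← hα]
    have : α ∈ f ⁻¹' W := by rw [hWpre]; rfl
    exact this
  have hmemU : d ⁻¹' W ∈ U := Filter.mem_map.mp (htend (hWopen.mem_nhds hqW))
  have hsub : d ⁻¹' W ⊆ {k} := by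
    intro n hn
    obtain ⟨β, hβA, hβ⟩ := hdD n
    have hβα : β ∈ f ⁻¹' W := by show f β ∈ W; rw [hβ]; exact hn
    rw [hWpre] at hβα
    have : d n = d k := by
      rw [← hβ, hβα, hα, hk]
    exact hdinj this
  exact Set.Finite.notMem_hyperfilter ((Set.finite_singleton k).subset hsub) hmemU
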